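/- Let U = ∑_{j=1}^{r} A_j ⊗ B_j be a unitary of Schmidt rank r on ℂ^{d_A} ⊗ ℂ^{d_B}. If all products A_i A_j† (i,j = 1,...,r) are normal and pairwise commuting, and all products A_i† A_j are normal and pairwise commuting, then U is locally equivalent to a controlled unitary from the A side, i.e. there exist unitaries Q, R on ℂ^{d_A} such that (Q ⊗ I) U (R ⊗ I) = ∑_{k=1}^{d_A} |k⟩⟨k| ⊗ V_k with each V_k unitary. -/

import Mathlib

open Matrix Kronecker Finset Module LinearMap

noncomputable section

namespace Stmt10Aux

lemma jd_aux (N : ℕ) :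
    ∀ (E : Type) [NormedAddCommGroup E] [InnerProductSpace ℂ E] [FiniteDimensional ℂ E],
    Module.finrank ℂ E = N → ∀ {ι : Type} (T : ι → E →ₗ[ℂ] E),
    (∀ i, (T i).IsSymmetric) → (∀ i j, Commute (T i) (T j)) →
    ∃ b : OrthonormalBasis (Fin N) ℂ E, ∀ α i, ∃ c : ℂ, T i (b α) = c • b α := by
  induction N using Nat.strong_induction_on with
  | _ N IH =>
    intro E _ _ _ hrank ι T hsym hcomm
    match N, hrank with
    | 0, hrank =>
      exact ⟨(stdOrthonormalBasis ℂ E).reindex (finCongr hrank), fun α => α.elim0⟩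
    | (N' + 1), hrank =>
      have hnt : Nontrivial E := by
        have : 0 < Module.finrank ℂ E := by omega
        exact Module.nontrivial_of_finrank_pos this
      have htop : ⨆ χ : ι → ℂ, ⨅ i, Module.End.eigenspace (T i) (χ i) = ⊤ :=
        LinearMap.IsSymmetric.iSup_iInf_eq_top_of_commute hsym (fun i j _ => hcomm i j)
      have hex : ∃ (χ : ι → ℂ), (⨅ i, Module.End.eigenspace (T i) (χ i)) ≠ ⊥ := by
        by_contra h
        push_neg at h
        rw [show (⨆ χ : ι → ℂ, ⨅ i, Module.End.eigenspace (T i) (χ i)) = ⊥ by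
          simp [h]] at htop
        exact bot_ne_top (α := Submodule ℂ E) htop
      obtain ⟨χ, hχ⟩ := hex
      obtain ⟨x, hxmem, hx0⟩ := Submodule.exists_mem_ne_zero_of_ne_bot hχ
      have hxeig : ∀ i, T i x = χ i • x := by
        intro i
        have := (Submodule.mem_iInf _).mp hxmem i
        exact (Module.End.mem_eigenspace_iff).mp this
      set y : E := ‖x‖⁻¹ • x with hy
      have hy0 : y ≠ 0 := by
        simp only [hy, ne_eq, smul_eq_zero, inv_eq_zero, norm_eq_zero]
        tauto
      have hyn : ‖y‖ = 1 := norm_smul_inv_norm hx0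
      have hyeig : ∀ i, T i y = χ i • y := by
        intro i
        rw [hy, (T i).map_smul_of_tower, hxeig i, smul_comm]
      set W := (ℂ ∙ y)ᗮ with hW
      have hyW : ∀ z ∈ W, inner ℂ y z = (0 : ℂ) := by
        intro z hz
        exact (Submodule.mem_orthogonal (ℂ ∙ y) z).mp hz y (Submodule.mem_span_singleton_self y)
      have hinv : ∀ i, ∀ z ∈ W, T i z ∈ W := by
        intro i z hz
        rw [Submodule.mem_orthogonal]
        intro u hu
        obtain ⟨a, rfl⟩ := Submodule.mem_span_singleton.mp hu
        rw [inner_smul_left]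
        have : (inner ℂ y (T i z) : ℂ) = inner ℂ (T i y) z := (hsym i y z).symm
        rw [this, hyeig i, inner_smul_left, hyW z hz, mul_zero, mul_zero]
      have hrankW : Module.finrank ℂ W = N' := by
        have h1 : Module.finrank ℂ (ℂ ∙ y) = 1 := finrank_span_singleton hy0
        have h2 := Submodule.finrank_add_finrank_orthogonal (K := (ℂ ∙ y)) (E := E)
        rw [h1, hrank, ← hW] at h2
        omega
      set T' : ι → W →ₗ[ℂ] W := fun i => (T i).restrict (hinv i) with hT'
      have hsym' : ∀ i, (T' i).IsSymmetric := by
        intro i z z'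
        have : ((T' i z : W) : E) = T i (z : E) := rfl
        simp only [Submodule.coe_inner, this]
        exact hsym i (z : E) (z' : E)
      have hcomm' : ∀ i j, Commute (T' i) (T' j) := by
        intro i j
        refine LinearMap.ext fun z => Subtype.ext ?_
        have h := LinearMap.congr_fun (hcomm i j) (z : E)
        simp only [Module.End.mul_apply] at h ⊢
        simpa [hT', LinearMap.restrict_coe_apply] using h
      obtain ⟨bW, hbW⟩ := IH N' (by omega) W hrankW T' hsym' hcomm'
      have hfam_on : Orthonormal ℂ (Fin.cons y (fun α => (bW α : E)) : Fin (N' + 1) → E) := by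
        rw [orthonormal_iff_ite]
        intro i j
        refine Fin.cases ?_ ?_ i <;> [skip; intro i'] <;> refine Fin.cases ?_ ?_ j
        · simp only [Fin.cons_zero, if_pos rfl]
          rw [inner_self_eq_norm_sq_to_K, hyn]; norm_num
        · intro j'
          simp only [Fin.cons_zero, Fin.cons_succ]
          rw [if_neg (by simp [(Fin.succ_ne_zero j').symm] : ¬ (0 : Fin (N'+1)) = j'.succ)]
          exact hyW _ (bW j').2
        · simp only [Fin.cons_zero, Fin.cons_succ]
          rw [if_neg (Fin.succ_ne_zero i')]
          rw [← inner_conj_symm, hyW _ (bW i').2, map_zero]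
        · intro j'
          simp only [Fin.cons_succ]
          have := (orthonormal_iff_ite.mp bW.orthonormal) i' j'
          rw [Submodule.coe_inner] at this
          rw [this]
          simp [Fin.succ_inj]
      have hcard : Module.finrank ℂ E = Fintype.card (Fin (N' + 1)) := by simp [hrank]
      obtain ⟨b, hb⟩ := Orthonormal.exists_orthonormalBasis_extension_of_card_eq hcard
        (v := (Fin.cons y (fun α => (bW α : E)) : Fin (N' + 1) → E)) (s := Set.univ)
        (hfam_on.comp _ Subtype.val_injective)
      have hbfam : ∀ i, b i = (Fin.cons y (fun α => (bW α : E)) : Fin (N' + 1) → E) i :=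
        fun i => hb i (Set.mem_univ i)
      refine ⟨b, ?_⟩
      intro α i
      refine Fin.cases ?_ ?_ α
      · refine ⟨χ i, ?_⟩
        rw [hbfam]
        simp only [Fin.cons_zero]
        exact hyeig i
      · intro α'
        obtain ⟨c, hc⟩ := hbW α' i
        refine ⟨c, ?_⟩
        rw [hbfam]
        simp only [Fin.cons_succ]
        have h1 : T i ((bW α' : W) : E) = ((T' i (bW α') : W) : E) := rfl
        rw [h1, hc]
        rfl

lemma jd {E : Type} [NormedAddCommGroup E] [InnerProductSpace ℂ E] [FiniteDimensional ℂ E]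
    {ι : Type} (T : ι → E →ₗ[ℂ] E)
    (hsym : ∀ i, (T i).IsSymmetric) (hcomm : ∀ i j, Commute (T i) (T j)) :
    ∃ b : OrthonormalBasis (Fin (Module.finrank ℂ E)) ℂ E,
      ∀ α i, ∃ c : ℂ, T i (b α) = c • b α :=
  jd_aux _ E rfl T hsym hcomm


variable {E : Type} [NormedAddCommGroup E] [InnerProductSpace ℂ E]
variable {n : ℕ} {Λ : Type} [DecidableEq Λ]

/-- projection onto the span of basis vectors with label `q` -/
def projC (b : OrthonormalBasis (Fin n) ℂ E) (t : Fin n → Λ) (q : Λ) : E →ₗ[ℂ] E :=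
  ∑ δ ∈ Finset.univ.filter (fun δ => t δ = q),
    LinearMap.smulRight ((innerSL ℂ (b δ)).toLinearMap) (b δ)

lemma projC_apply (b : OrthonormalBasis (Fin n) ℂ E) (t : Fin n → Λ) (q : Λ) (x : E) :
    projC b t q x = ∑ δ ∈ Finset.univ.filter (fun δ => t δ = q),
      (inner ℂ (b δ) x : ℂ) • b δ := by
  simp [projC, LinearMap.sum_apply, LinearMap.smulRight_apply]

lemma projC_basis (b : OrthonormalBasis (Fin n) ℂ E) (t : Fin n → Λ) (q : Λ) (γ : Fin n) :
    projC b t q (b γ) = if t γ = q then b γ else 0 := by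
  have horth := orthonormal_iff_ite.mp b.orthonormal
  rw [projC_apply]
  have h1 : ∀ δ ∈ Finset.univ.filter (fun δ => t δ = q),
      (inner ℂ (b δ) (b γ) : ℂ) • b δ = if δ = γ then b δ else 0 := by
    intro δ _
    rw [horth]
    split <;> simp
  rw [Finset.sum_congr rfl h1, Finset.sum_ite_eq' _ γ (fun δ => b δ)]
  simp only [Finset.mem_filter, Finset.mem_univ, true_and]

lemma projC_symm (b : OrthonormalBasis (Fin n) ℂ E) (t : Fin n → Λ) (q : Λ) (x y : E) :
    (inner ℂ (projC b t q x) y : ℂ) = inner ℂ x (projC b t q y) := by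
  rw [projC_apply, projC_apply, sum_inner, inner_sum]
  refine Finset.sum_congr rfl fun δ _ => ?_
  rw [inner_smul_left, inner_smul_right, ← inner_conj_symm x (b δ)]
  ring

lemma comp_projC (b : OrthonormalBasis (Fin n) ℂ E) (t : Fin n → Λ) (q : Λ)
    (O : E →ₗ[ℂ] E) (e : Fin n → ℂ) (s : ℂ)
    (hO : ∀ δ, O (b δ) = e δ • b δ) (he : ∀ δ, t δ = q → e δ = s) :
    O ∘ₗ projC b t q = s • projC b t q := by
  refine LinearMap.ext fun x => ?_
  rw [LinearMap.comp_apply, projC_apply, map_sum, LinearMap.smul_apply, projC_apply,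
    Finset.smul_sum]
  refine Finset.sum_congr rfl fun δ hδ => ?_
  rw [O.map_smul, hO δ, he δ (Finset.mem_filter.mp hδ).2, smul_smul, smul_smul, mul_comm]

lemma projC_comp [FiniteDimensional ℂ E]
    (b : OrthonormalBasis (Fin n) ℂ E) (t : Fin n → Λ) (q : Λ)
    (O : E →ₗ[ℂ] E) (e : Fin n → ℂ) (s : ℂ)
    (hO : ∀ δ, LinearMap.adjoint O (b δ) = (starRingEnd ℂ) (e δ) • b δ)
    (he : ∀ δ, t δ = q → e δ = s) :
    projC b t q ∘ₗ O = s • projC b t q := by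
  refine LinearMap.ext fun x => ?_
  rw [LinearMap.comp_apply, projC_apply, LinearMap.smul_apply, projC_apply, Finset.smul_sum]
  refine Finset.sum_congr rfl fun δ hδ => ?_
  have h1 : (inner ℂ (b δ) (O x) : ℂ) = e δ * inner ℂ (b δ) x := by
    rw [← LinearMap.adjoint_inner_left, hO δ, inner_smul_left]
    simp
  rw [h1, he δ (Finset.mem_filter.mp hδ).2, smul_smul]

lemma projC_projC (b : OrthonormalBasis (Fin n) ℂ E) (t : Fin n → Λ) (q q' : Λ) :
    projC b t q ∘ₗ projC b t q' = if q = q' then projC b t q else 0 := by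
  refine Module.Basis.ext b.toBasis fun γ => ?_
  rw [OrthonormalBasis.coe_toBasis, LinearMap.comp_apply, projC_basis]
  by_cases h : t γ = q'
  · rw [if_pos h, projC_basis]
    by_cases h2 : q = q'
    · rw [if_pos h2, projC_basis, if_pos (h.trans h2.symm)]
    · rw [if_neg (fun hh : t γ = q => h2 (hh.symm.trans h))]
      rw [if_neg h2]; rfl
  · rw [if_neg h, map_zero]
    by_cases h2 : q = q'
    · rw [if_pos h2, projC_basis, if_neg (fun hh : t γ = q => h (hh.trans h2))]
    · rw [if_neg h2]; rfl

lemma sum_projC (b : OrthonormalBasis (Fin n) ℂ E) (t : Fin n → Λ) :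
    ∑ q ∈ Finset.univ.image t, projC b t q = LinearMap.id := by
  refine Module.Basis.ext b.toBasis fun γ => ?_
  rw [OrthonormalBasis.coe_toBasis, LinearMap.sum_apply, LinearMap.id_apply]
  have h1 : ∀ q ∈ Finset.univ.image t, projC b t q (b γ)
      = if q = t γ then b γ else 0 := by
    intro q _
    rw [projC_basis]
    simp only [eq_comm]
  rw [Finset.sum_congr rfl h1, Finset.sum_ite_eq' _ (t γ) (fun _ => b γ)]
  simp

lemma sum_projC_apply (b : OrthonormalBasis (Fin n) ℂ E) (t : Fin n → Λ) (x : E) :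
    ∑ q ∈ Finset.univ.image t, projC b t q x = x := by
  have := LinearMap.congr_fun (sum_projC b t) x
  simpa [LinearMap.sum_apply] using this

lemma inner_projC_self (b : OrthonormalBasis (Fin n) ℂ E) (t : Fin n → Λ) (q : Λ) (x : E) :
    (inner ℂ x (projC b t q x) : ℂ) = (‖projC b t q x‖ : ℂ) ^ 2 := by
  have hidem := LinearMap.congr_fun (projC_projC b t q q) x
  rw [if_pos rfl, LinearMap.comp_apply] at hidem
  calc (inner ℂ x (projC b t q x) : ℂ) = inner ℂ x (projC b t q (projC b t q x)) := by rw [hidem]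
    _ = inner ℂ (projC b t q x) (projC b t q x) := (projC_symm b t q x _).symm
    _ = (‖projC b t q x‖ : ℂ) ^ 2 := by
        rw [inner_self_eq_norm_sq_to_K]; norm_num

lemma eig_adjoint_conj [FiniteDimensional ℂ E] (O : E →ₗ[ℂ] E) {x : E} (hx : x ≠ 0) {a a' : ℂ}
    (h1 : O x = a • x) (h2 : LinearMap.adjoint O x = a' • x) : a' = (starRingEnd ℂ) a := by
  have h3 : (inner ℂ (LinearMap.adjoint O x) x : ℂ) = inner ℂ x (O x) :=
    LinearMap.adjoint_inner_left O x x
  rw [h1, h2, inner_smul_left, inner_smul_right] at h3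
  have h4 : (inner ℂ x x : ℂ) ≠ 0 := inner_self_ne_zero.mpr hx
  have h5 := mul_right_cancel₀ h4 h3
  rw [← h5]
  simp


section Helpers

variable {E : Type} [NormedAddCommGroup E] [InnerProductSpace ℂ E]
variable {n : ℕ} {Λ : Type} [DecidableEq Λ]

lemma projC_adjoint [FiniteDimensional ℂ E] (b : OrthonormalBasis (Fin n) ℂ E)
    (t : Fin n → Λ) (q : Λ) :
    LinearMap.adjoint (projC b t q) = projC b t q := by
  have h : (projC b t q).IsSymmetric := fun x y => projC_symm b t q x y
  have h2 := (LinearMap.isSymmetric_iff_isSelfAdjoint _).mp h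
  rw [← LinearMap.star_eq_adjoint]
  exact h2

lemma commute_smul_left' {A B : Module.End ℂ E} (c : ℂ) (h : Commute A B) :
    Commute (c • A) B := by
  show (c • A) * B = B * (c • A)
  rw [smul_mul_assoc, mul_smul_comm, h.eq]

lemma commute_smul_right' {A B : Module.End ℂ E} (c : ℂ) (h : Commute A B) :
    Commute A (c • B) := (commute_smul_left' c h.symm).symm

lemma eig_combo {x : E} {O O' : E →ₗ[ℂ] E} {e1 e2 : ℂ}
    (h1 : (O + O') x = e1 • x) (h2 : (Complex.I • (O - O')) x = e2 • x) :
    O x = ((e1 - Complex.I * e2) / 2) • x := by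
  have hI : Complex.I ≠ 0 := Complex.I_ne_zero
  simp only [LinearMap.add_apply, LinearMap.smul_apply, LinearMap.sub_apply] at h1 h2
  have h3 : O x - O' x = (-Complex.I * e2) • x := by
    have h := congrArg (fun z => (Complex.I)⁻¹ • z) h2
    simp only [smul_smul, inv_mul_cancel₀ hI, one_smul] at h
    rw [h, Complex.inv_I]
  have h5 : (2 : ℂ) • O x = (e1 - Complex.I * e2) • x := by
    have h6 := congrArg₂ (· + ·) h1 h3
    calc (2 : ℂ) • O x = O x + O x := two_smul ℂ (O x)
      _ = (O x + O' x) + (O x - O' x) := by abel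
      _ = e1 • x + (-Complex.I * e2) • x := h6
      _ = (e1 - Complex.I * e2) • x := by rw [← add_smul]; ring_nf
  have h7 := congrArg (fun z => (2 : ℂ)⁻¹ • z) h5
  simp only [smul_smul] at h7
  rw [show ((2:ℂ)⁻¹ * 2) = 1 by norm_num, one_smul] at h7
  rw [h7]
  congr 1
  field_simp

lemma comp_adjoint_ne_zero [FiniteDimensional ℂ E] (N : E →ₗ[ℂ] E) (h : N ≠ 0) :
    N ∘ₗ LinearMap.adjoint N ≠ 0 := by
  intro h0
  apply h
  have hadj : LinearMap.adjoint N = 0 := by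
    ext x
    have h1 : (inner ℂ (LinearMap.adjoint N x) (LinearMap.adjoint N x) : ℂ) = 0 := by
      have h2 := LinearMap.adjoint_inner_left N (LinearMap.adjoint N x) x
      rw [h2]
      have h3 := LinearMap.congr_fun h0 x
      rw [LinearMap.comp_apply] at h3
      rw [h3]
      simp
    simpa using inner_self_eq_zero.mp h1
  have := congrArg LinearMap.adjoint hadj
  rwa [LinearMap.adjoint_adjoint, map_zero] at this

/-- joint diagonalization of a family of commuting normal operators closed under adjoint -/
lemma jd_normal_family [FiniteDimensional ℂ E] {r : ℕ} (g : Fin r × Fin r → E →ₗ[ℂ] E)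
    (hadj : ∀ p : Fin r × Fin r, LinearMap.adjoint (g p) = g (p.2, p.1))
    (hcomm : ∀ p p', Commute (g p) (g p')) :
    ∃ (b : OrthonormalBasis (Fin (Module.finrank ℂ E)) ℂ E)
      (μ : Fin (Module.finrank ℂ E) → Fin r × Fin r → ℂ),
      ∀ α p, g p (b α) = μ α p • b α := by
  set T : (Fin r × Fin r) ⊕ (Fin r × Fin r) → E →ₗ[ℂ] E :=
    Sum.elim (fun p => g p + g (p.2, p.1))
      (fun p => Complex.I • (g p - g (p.2, p.1))) with hT
  have hsym : ∀ i, (T i).IsSymmetric := by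
    intro i
    rw [LinearMap.isSymmetric_iff_isSelfAdjoint, LinearMap.isSelfAdjoint_iff']
    cases i with
    | inl p =>
      simp only [hT, Sum.elim_inl, map_add, hadj]
      abel
    | inr p =>
      simp only [hT, Sum.elim_inr, map_smulₛₗ, map_sub, hadj, Complex.conj_I,
        Prod.mk.eta, neg_smul, smul_sub]
      abel
  have hcommT : ∀ i j, Commute (T i) (T j) := by
    have hc : ∀ p p' (a a' : ℂ),
        Commute (a • (g p + g (p.2, p.1))) (a' • (g p' + g (p'.2, p'.1)))
        ∧ Commute (a • (g p - g (p.2, p.1))) (a' • (g p' - g (p'.2, p'.1)))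
        ∧ Commute (a • (g p + g (p.2, p.1))) (a' • (g p' - g (p'.2, p'.1)))
        ∧ Commute (a • (g p - g (p.2, p.1))) (a' • (g p' + g (p'.2, p'.1))) := by
      intro p p' a a'
      refine ⟨?_, ?_, ?_, ?_⟩ <;>
        refine commute_smul_left' _ (commute_smul_right' _ ?_) <;>
        [ exact ((hcomm p p').add_right (hcomm p (p'.2,p'.1))).add_left
            ((hcomm (p.2,p.1) p').add_right (hcomm (p.2,p.1) (p'.2,p'.1)));
          exact ((hcomm p p').sub_right (hcomm p (p'.2,p'.1))).sub_left
            ((hcomm (p.2,p.1) p').sub_right (hcomm (p.2,p.1) (p'.2,p'.1)));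
          exact ((hcomm p p').sub_right (hcomm p (p'.2,p'.1))).add_left
            ((hcomm (p.2,p.1) p').sub_right (hcomm (p.2,p.1) (p'.2,p'.1)));
          exact ((hcomm p p').add_right (hcomm p (p'.2,p'.1))).sub_left
            ((hcomm (p.2,p.1) p').add_right (hcomm (p.2,p.1) (p'.2,p'.1)))]
    intro i j
    cases i with
    | inl p =>
      cases j with
      | inl p' => simpa [hT] using (hc p p' 1 1).1
      | inr p' => simpa [hT] using (hc p p' 1 Complex.I).2.2.1
    | inr p =>
      cases j with
      | inl p' => simpa [hT] using (hc p p' Complex.I 1).2.2.2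
      | inr p' => simpa [hT] using (hc p p' Complex.I Complex.I).2.1
  obtain ⟨b, hb⟩ := jd T hsym hcommT
  refine ⟨b, fun α p => ((hb α (Sum.inl p)).choose - Complex.I * (hb α (Sum.inr p)).choose) / 2,
    fun α p => ?_⟩
  have h1 := (hb α (Sum.inl p)).choose_spec
  have h2 := (hb α (Sum.inr p)).choose_spec
  simp only [hT, Sum.elim_inl, Sum.elim_inr] at h1 h2
  exact eig_combo h1 h2

end Helpers

set_option linter.unusedSectionVars false

section Core

variable {E : Type} [NormedAddCommGroup E] [InnerProductSpace ℂ E] [FiniteDimensional ℂ E]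
variable {r : ℕ}

/-- right Gram family -/
def Gm (f : Fin r → E →ₗ[ℂ] E) : Fin r × Fin r → E →ₗ[ℂ] E :=
  fun p => LinearMap.adjoint (f p.1) ∘ₗ f p.2

/-- left Gram family -/
def Lm (f : Fin r → E →ₗ[ℂ] E) : Fin r × Fin r → E →ₗ[ℂ] E :=
  fun p => f p.1 ∘ₗ LinearMap.adjoint (f p.2)

lemma Gm_apply (f : Fin r → E →ₗ[ℂ] E) (p : Fin r × Fin r) (x : E) :
    Gm f p x = LinearMap.adjoint (f p.1) (f p.2 x) := rfl

lemma Lm_apply (f : Fin r → E →ₗ[ℂ] E) (p : Fin r × Fin r) (x : E) :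
    Lm f p x = f p.1 (LinearMap.adjoint (f p.2) x) := rfl

lemma adjG (f : Fin r → E →ₗ[ℂ] E) (p : Fin r × Fin r) :
    LinearMap.adjoint (Gm f p) = Gm f (p.2, p.1) := by
  simp only [Gm, LinearMap.adjoint_comp, LinearMap.adjoint_adjoint]

lemma adjL (f : Fin r → E →ₗ[ℂ] E) (p : Fin r × Fin r) :
    LinearMap.adjoint (Lm f p) = Lm f (p.2, p.1) := by
  simp only [Lm, LinearMap.adjoint_comp, LinearMap.adjoint_adjoint]

variable {n : ℕ} {f : Fin r → E →ₗ[ℂ] E}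
variable [DecidableEq (Fin r × Fin r → ℂ)]

section WithBases

variable {v0 : OrthonormalBasis (Fin n) ℂ E} {μ : Fin n → Fin r × Fin r → ℂ}
variable {w0 : OrthonormalBasis (Fin n) ℂ E} {ν : Fin n → Fin r × Fin r → ℂ}

/-- conjugate symmetry of joint eigenvalue tuples -/
lemma tuple_conj (hv0 : ∀ α p, Gm f p (v0 α) = μ α p • v0 α) (α : Fin n) (p : Fin r × Fin r) :
    μ α (p.2, p.1) = (starRingEnd ℂ) (μ α p) := by
  have hne : v0 α ≠ 0 := v0.orthonormal.ne_zero α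
  refine eig_adjoint_conj (Gm f p) hne (hv0 α p) ?_
  rw [adjG]
  exact hv0 α (p.2, p.1)

lemma tuple_conj_L (hw0 : ∀ β p, Lm f p (w0 β) = ν β p • w0 β) (β : Fin n) (p : Fin r × Fin r) :
    ν β (p.2, p.1) = (starRingEnd ℂ) (ν β p) := by
  have hne : w0 β ≠ 0 := w0.orthonormal.ne_zero β
  refine eig_adjoint_conj (Lm f p) hne (hw0 β p) ?_
  rw [adjL]
  exact hw0 β (p.2, p.1)

/-- diagonal eigenvalues are norms -/
lemma tuple_diag (hv0 : ∀ α p, Gm f p (v0 α) = μ α p • v0 α) (α : Fin n) (j : Fin r) :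
    (inner ℂ (f j (v0 α)) (f j (v0 α)) : ℂ) = μ α (j, j) := by
  have h1 : (inner ℂ (f j (v0 α)) (f j (v0 α)) : ℂ) = inner ℂ (v0 α) (Gm f (j,j) (v0 α)) := by
    rw [Gm_apply, LinearMap.adjoint_inner_right]
  rw [h1, hv0 α (j,j), inner_smul_right]
  have h2 : (inner ℂ (v0 α) (v0 α) : ℂ) = 1 := by
    have := (orthonormal_iff_ite.mp v0.orthonormal) α α
    simpa using this
  rw [h2, mul_one]

lemma tuple_diag_L (hw0 : ∀ β p, Lm f p (w0 β) = ν β p • w0 β) (β : Fin n) (j : Fin r) :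
    (inner ℂ (LinearMap.adjoint (f j) (w0 β)) (LinearMap.adjoint (f j) (w0 β)) : ℂ)
      = ν β (j, j) := by
  have h1 := LinearMap.adjoint_inner_left (f j) (LinearMap.adjoint (f j) (w0 β)) (w0 β)
  have h2 : (inner ℂ (w0 β) (f j (LinearMap.adjoint (f j) (w0 β))) : ℂ)
      = inner ℂ (w0 β) (Lm f (j,j) (w0 β)) := rfl
  rw [h1, h2, hw0 β (j,j), inner_smul_right]
  have h3 : (inner ℂ (w0 β) (w0 β) : ℂ) = 1 := by
    have := (orthonormal_iff_ite.mp w0.orthonormal) β β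
    simpa using this
  rw [h3, mul_one]

lemma tuple_diag_zero (hv0 : ∀ α p, Gm f p (v0 α) = μ α p • v0 α) (α : Fin n) (j : Fin r)
    (h : μ α (j, j) = 0) : f j (v0 α) = 0 := by
  have := tuple_diag hv0 α j
  rw [h] at this
  exact inner_self_eq_zero.mp this

lemma tuple_diag_zero_L (hw0 : ∀ β p, Lm f p (w0 β) = ν β p • w0 β) (β : Fin n) (j : Fin r)
    (h : ν β (j, j) = 0) : LinearMap.adjoint (f j) (w0 β) = 0 := by
  have := tuple_diag_L hw0 β j
  rw [h] at this
  exact inner_self_eq_zero.mp this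

/-- G composed with class projection -/
lemma C1v (hv0 : ∀ α p, Gm f p (v0 α) = μ α p • v0 α) (p : Fin r × Fin r)
    (q : Fin r × Fin r → ℂ) :
    Gm f p ∘ₗ projC v0 μ q = q p • projC v0 μ q :=
  comp_projC v0 μ q (Gm f p) (fun α => μ α p) (q p) (fun δ => hv0 δ p)
    (fun δ h => by rw [← h])

lemma C2v (hv0 : ∀ α p, Gm f p (v0 α) = μ α p • v0 α) (p : Fin r × Fin r)
    (q : Fin r × Fin r → ℂ) :
    projC v0 μ q ∘ₗ Gm f p = q p • projC v0 μ q := by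
  refine projC_comp v0 μ q (Gm f p) (fun α => μ α p) (q p) ?_ (fun δ h => by rw [← h])
  intro δ
  rw [adjG, ← tuple_conj hv0 δ p]
  exact hv0 δ (p.2, p.1)

lemma C1w (hw0 : ∀ β p, Lm f p (w0 β) = ν β p • w0 β) (p : Fin r × Fin r)
    (c : Fin r × Fin r → ℂ) :
    Lm f p ∘ₗ projC w0 ν c = c p • projC w0 ν c :=
  comp_projC w0 ν c (Lm f p) (fun β => ν β p) (c p) (fun δ => hw0 δ p)
    (fun δ h => by rw [← h])

lemma C2w (hw0 : ∀ β p, Lm f p (w0 β) = ν β p • w0 β) (p : Fin r × Fin r)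
    (c : Fin r × Fin r → ℂ) :
    projC w0 ν c ∘ₗ Lm f p = c p • projC w0 ν c := by
  refine projC_comp w0 ν c (Lm f p) (fun β => ν β p) (c p) ?_ (fun δ h => by rw [← h])
  intro δ
  rw [adjL, ← tuple_conj_L hw0 δ p]
  exact hw0 δ (p.2, p.1)

/-- the R1 relation -/
lemma R1pt (hv0 : ∀ α p, Gm f p (v0 α) = μ α p • v0 α)
    (hw0 : ∀ β p, Lm f p (w0 β) = ν β p • w0 β)
    (q c : Fin r × Fin r → ℂ) (i k j : Fin r) (y : E) :
    c (i, k) • projC w0 ν c (f j (projC v0 μ q y))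
      = q (k, j) • projC w0 ν c (f i (projC v0 μ q y)) := by
  have h1 : projC w0 ν c (Lm f (i, k) (f j (projC v0 μ q y)))
      = c (i, k) • projC w0 ν c (f j (projC v0 μ q y)) := by
    have := LinearMap.congr_fun (C2w hw0 (i, k) c) (f j (projC v0 μ q y))
    simpa using this
  have h2 : Lm f (i, k) (f j (projC v0 μ q y))
      = q (k, j) • f i (projC v0 μ q y) := by
    have h3 : Lm f (i, k) (f j (projC v0 μ q y))
        = f i (Gm f (k, j) (projC v0 μ q y)) := rfl
    have h4 : Gm f (k, j) (projC v0 μ q y) = q (k, j) • projC v0 μ q y := by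
      have := LinearMap.congr_fun (C1v hv0 (k, j) q) y
      simpa using this
    rw [h3, h4, (f i).map_smul]
  rw [← h1, h2, (projC w0 ν c).map_smul]

/-- proportionality of projected images -/
lemma M1pt (hv0 : ∀ α p, Gm f p (v0 α) = μ α p • v0 α)
    (hw0 : ∀ β p, Lm f p (w0 β) = ν β p • w0 β)
    (q c : Fin r × Fin r → ℂ) (j0 : Fin r) (hq : q (j0, j0) ≠ 0) (i : Fin r) (x : E) :
    projC w0 ν c (f i (projC v0 μ q x))
      = (c (i, j0) / q (j0, j0)) • projC w0 ν c (f j0 (projC v0 μ q x)) := by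
  have h := R1pt hv0 hw0 q c i j0 j0 x
  have h5 := congrArg (fun z => (q (j0, j0))⁻¹ • z) h
  simp only [smul_smul] at h5
  rw [inv_mul_cancel₀ hq, one_smul] at h5
  rw [← h5]
  congr 1
  field_simp

lemma M1op (hv0 : ∀ α p, Gm f p (v0 α) = μ α p • v0 α)
    (hw0 : ∀ β p, Lm f p (w0 β) = ν β p • w0 β)
    (q c : Fin r × Fin r → ℂ) (j0 : Fin r) (hq : q (j0, j0) ≠ 0) (i : Fin r) :
    projC w0 ν c ∘ₗ f i ∘ₗ projC v0 μ q
      = (c (i, j0) / q (j0, j0)) • (projC w0 ν c ∘ₗ f j0 ∘ₗ projC v0 μ q) := by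
  refine LinearMap.ext fun x => ?_
  simp only [LinearMap.comp_apply, LinearMap.smul_apply]
  exact M1pt hv0 hw0 q c j0 hq i x

lemma adjoint_N_pt (c q : Fin r × Fin r → ℂ) (j0 : Fin r) (x : E) :
    LinearMap.adjoint (projC w0 ν c ∘ₗ f j0 ∘ₗ projC v0 μ q) x
      = projC v0 μ q (LinearMap.adjoint (f j0) (projC w0 ν c x)) := by
  rw [LinearMap.adjoint_comp, LinearMap.adjoint_comp, projC_adjoint, projC_adjoint]
  rfl

/-- the `sublabel` lemma -/
lemma sublabel (hv0 : ∀ α p, Gm f p (v0 α) = μ α p • v0 α)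
    (hw0 : ∀ β p, Lm f p (w0 β) = ν β p • w0 β)
    (q c : Fin r × Fin r → ℂ) (j0 : Fin r) (hq : q (j0, j0) ≠ 0)
    (hN : projC w0 ν c ∘ₗ f j0 ∘ₗ projC v0 μ q ≠ 0) :
    ∀ i k, c (i, k) = q (k, j0) * q (j0, i) / q (j0, j0) := by
  have hNadjpt := fun x => adjoint_N_pt (f := f) (v0 := v0) (μ := μ) (w0 := w0) (ν := ν) c q j0 x
  set Pw := projC w0 ν c with hPw
  set Pv := projC v0 μ q with hPv
  set N := Pw ∘ₗ f j0 ∘ₗ Pv with hNdef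
  set a : Fin r → ℂ := fun i => c (i, j0) / q (j0, j0) with ha
  have hPvidem : ∀ y, Pv (Pv y) = Pv y := by
    intro y
    have := LinearMap.congr_fun (projC_projC v0 μ q q) y
    rw [if_pos rfl] at this
    simpa using this
  -- hA0 : c (j0,j0) ≠ 0
  have hA0 : c (j0, j0) ≠ 0 := by
    intro h0
    apply hN
    have hadj0 : LinearMap.adjoint N = 0 := by
      ext x
      rw [hNadjpt x]
      have h1 : LinearMap.adjoint (f j0) (Pw x) = 0 := by
        rw [hPw, projC_apply, map_sum]
        refine Finset.sum_eq_zero fun δ hδ => ?_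
        have hδc : ν δ = c := (Finset.mem_filter.mp hδ).2
        rw [(LinearMap.adjoint (f j0)).map_smul,
          tuple_diag_zero_L hw0 δ j0 (by rw [hδc, h0]), smul_zero]
      rw [h1, map_zero, LinearMap.zero_apply]
    have := congrArg LinearMap.adjoint hadj0
    rwa [LinearMap.adjoint_adjoint, map_zero] at this
  -- the witness vector z
  have hT'' := comp_adjoint_ne_zero N hN
  obtain ⟨x0, hx0⟩ := DFunLike.ne_iff.mp hT''
  rw [LinearMap.zero_apply] at hx0
  set z := Pv (LinearMap.adjoint (f j0) (Pw x0)) with hz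
  have hPvz : Pv z = z := by rw [hz, hPvidem]
  have hDx0 : (N ∘ₗ LinearMap.adjoint N) x0 = Pw (f j0 z) := by
    rw [LinearMap.comp_apply, hNadjpt x0, hNdef]
    simp only [LinearMap.comp_apply]
    rw [← hz, hPvz]
  have hNz : Pw (f j0 z) ≠ 0 := by rw [← hDx0]; exact hx0
  have ptM1 : ∀ i' y, Pw (f i' (Pv y)) = a i' • Pw (f j0 (Pv y)) :=
    fun i' y => M1pt hv0 hw0 q c j0 hq i' y
  have hfz : ∀ i', Pw (f i' z) = a i' • Pw (f j0 z) := by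
    intro i'
    have := ptM1 i' z
    rwa [hPvz] at this
  -- Arel
  have Arel : ∀ i' k' j', c (i', k') * a j' = q (k', j') * a i' := by
    intro i' k' j'
    have h := R1pt hv0 hw0 q c i' k' j' z
    rw [← hPv, ← hPw] at h
    rw [hPvz, hfz j', hfz i', smul_smul, smul_smul] at h
    exact smul_left_injective ℂ hNz h
  -- Brel
  have Brel : ∀ i' k', c (i', k') = q (k', j0) * a i' := by
    intro i' k'
    have h1 : Pw (Lm f (i', k') (f j0 z)) = c (i', k') • Pw (f j0 z) := by
      have := LinearMap.congr_fun (C2w hw0 (i', k') c) (f j0 z)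
      rw [← hPw] at this
      simpa using this
    have h2 : Lm f (i', k') (f j0 z) = q (k', j0) • f i' z := by
      have h3 : Lm f (i', k') (f j0 z) = f i' (Gm f (k', j0) z) := rfl
      have h4 : Gm f (k', j0) z = q (k', j0) • z := by
        conv_lhs => rw [← hPvz]
        have := LinearMap.congr_fun (C1v hv0 (k', j0) q) z
        rw [← hPv] at this
        simp only [LinearMap.comp_apply, LinearMap.smul_apply] at this
        rw [this, hPvz]
      rw [h3, h4, (f i').map_smul]
    rw [h2, Pw.map_smul, hfz i', smul_smul] at h1
    exact (smul_left_injective ℂ hNz h1).symm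
  -- adjoint M1 pointwise
  have hadjM1 : ∀ k' x, Pv (LinearMap.adjoint (f k') (Pw x))
      = (starRingEnd ℂ) (a k') • Pv (LinearMap.adjoint (f j0) (Pw x)) := by
    intro k' x
    have hop := M1op hv0 hw0 q c j0 hq k'
    have := congrArg LinearMap.adjoint hop
    rw [map_smulₛₗ] at this
    have h5 := LinearMap.congr_fun this x
    simp only [LinearMap.smul_apply] at h5
    rw [adjoint_N_pt c q k' x, adjoint_N_pt c q j0 x] at h5
    rw [← hPv, ← hPw] at h5
    rw [ha]
    simp only [map_div₀] at h5 ⊢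
    exact h5
  -- Crel
  have Crel : ∀ i' k', c (i', k') = q (j0, i') * (starRingEnd ℂ) (a k') := by
    intro i' k'
    have way1 : Pw (f j0 (Pv (LinearMap.adjoint (f j0) (Lm f (i', k') (Pw x0)))))
        = c (i', k') • Pw (f j0 z) := by
      have h1 : Lm f (i', k') (Pw x0) = c (i', k') • Pw x0 := by
        have := LinearMap.congr_fun (C1w hw0 (i', k') c) x0
        rw [← hPw] at this
        simpa using this
      rw [h1, (LinearMap.adjoint (f j0)).map_smul, Pv.map_smul, (f j0).map_smul, Pw.map_smul,
        ← hz]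
    have way2 : Pw (f j0 (Pv (LinearMap.adjoint (f j0) (Lm f (i', k') (Pw x0)))))
        = (q (j0, i') * (starRingEnd ℂ) (a k')) • Pw (f j0 z) := by
      have h1 : LinearMap.adjoint (f j0) (Lm f (i', k') (Pw x0))
          = Gm f (j0, i') (LinearMap.adjoint (f k') (Pw x0)) := rfl
      have h2 : Pv (Gm f (j0, i') (LinearMap.adjoint (f k') (Pw x0)))
          = q (j0, i') • Pv (LinearMap.adjoint (f k') (Pw x0)) := by
        have := LinearMap.congr_fun (C2v hv0 (j0, i') q) (LinearMap.adjoint (f k') (Pw x0))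
        rw [← hPv] at this
        simpa using this
      have h3 : Pv (LinearMap.adjoint (f k') (Pw x0)) = (starRingEnd ℂ) (a k') • z := by
        rw [hadjM1 k' x0, ← hz]
      rw [h1, h2, h3, smul_smul, (f j0).map_smul, Pw.map_smul]
    rw [way1] at way2
    exact smul_left_injective ℂ hNz way2
  -- conclude
  have haj0 : a j0 = 1 := by
    have h1 := Arel j0 j0 j0
    have h2 : q (j0, j0) * a j0 = c (j0, j0) := by rw [ha]; field_simp
    rw [h2] at h1
    exact mul_left_cancel₀ hA0 (by rw [h1, mul_one])
  intro i k
  have h4 : c (i, j0) = q (j0, i) := by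
    have := Crel i j0
    rw [haj0] at this
    simpa using this
  have h5 : a i = q (j0, i) / q (j0, j0) := by rw [ha]; simp only []; rw [h4]
  have h6 := Brel i k
  rw [h5] at h6
  rw [h6]
  ring

/-- the key orthogonality: different w-classes give orthogonal blocks -/
lemma key_zero (hv0 : ∀ α p, Gm f p (v0 α) = μ α p • v0 α)
    (hw0 : ∀ β p, Lm f p (w0 β) = ν β p • w0 β)
    (q c c' : Fin r × Fin r → ℂ) (hcc' : c ≠ c') (j0 : Fin r) (hq : q (j0, j0) ≠ 0) :
    (projC w0 ν c ∘ₗ f j0 ∘ₗ projC v0 μ q) ∘ₗ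
      LinearMap.adjoint (projC w0 ν c' ∘ₗ f j0 ∘ₗ projC v0 μ q) = 0 := by
  by_contra hT
  have hNc : projC w0 ν c ∘ₗ f j0 ∘ₗ projC v0 μ q ≠ 0 := by
    intro h; exact hT (by rw [h, LinearMap.zero_comp])
  have hNc' : projC w0 ν c' ∘ₗ f j0 ∘ₗ projC v0 μ q ≠ 0 := by
    intro h; exact hT (by rw [h, map_zero, LinearMap.comp_zero])
  have s1 := sublabel hv0 hw0 q c j0 hq hNc
  have s2 := sublabel hv0 hw0 q c' j0 hq hNc'
  apply hcc'
  funext p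
  obtain ⟨i, k⟩ := p
  rw [s1 i k, s2 i k]

end WithBases

end Core

section Main

variable {E : Type} [NormedAddCommGroup E] [InnerProductSpace ℂ E] [FiniteDimensional ℂ E]

lemma real_smul_eq (t : ℝ) (y : E) : t • y = ((t : ℂ)) • y := by
  rw [← algebraMap_smul ℂ t y]
  norm_num

set_option maxHeartbeats 2000000 in
lemma ssvd {r : ℕ} (hr : 0 < r) (f : Fin r → E →ₗ[ℂ] E)
    (hGc : ∀ p p', Commute (Gm f p) (Gm f p'))
    (hLc : ∀ p p', Commute (Lm f p) (Lm f p')) :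
    ∃ (v u : OrthonormalBasis (Fin (Module.finrank ℂ E)) ℂ E)
      (d : Fin r → Fin (Module.finrank ℂ E) → ℂ),
      ∀ j α, f j (v α) = d j α • u α := by
  classical
  obtain ⟨v0, μ, hv0⟩ := jd_normal_family (Gm f) (adjG f) hGc
  obtain ⟨w0, ν, hw0⟩ := jd_normal_family (Lm f) (adjL f) hLc
  -- selector of a good index
  set js : (Fin r × Fin r → ℂ) → Fin r :=
    fun q => if h : ∃ j, q (j, j) ≠ 0 then h.choose else ⟨0, hr⟩ with hjs_def
  have hjs : ∀ q : Fin r × Fin r → ℂ, (∃ j, q (j, j) ≠ 0) → q (js q, js q) ≠ 0 := by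
    intro q h
    simp only [hjs_def, dif_pos h]
    exact h.choose_spec
  -- the N and S operators
  set Nop : (Fin r × Fin r → ℂ) → (Fin r × Fin r → ℂ) → E →ₗ[ℂ] E :=
    fun q c => projC w0 ν c ∘ₗ f (js q) ∘ₗ projC v0 μ q with hNop
  set Sop : (Fin r × Fin r → ℂ) → (Fin r × Fin r → ℂ) → E →ₗ[ℂ] E :=
    fun q c => if ∃ j, q (j, j) ≠ 0 then LinearMap.adjoint (Nop q c) ∘ₗ Nop q c else 0
    with hSop
  have hSop_pos : ∀ q c, (∃ j, q (j, j) ≠ 0) →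
      Sop q c = LinearMap.adjoint (Nop q c) ∘ₗ Nop q c := by
    intro q c h
    simp only [hSop, if_pos h]
  have hSop_neg : ∀ q c, ¬ (∃ j, q (j, j) ≠ 0) → Sop q c = 0 := by
    intro q c h
    simp only [hSop, if_neg h]
  -- pointwise helpers
  have pC1v : ∀ p q y, Gm f p (projC v0 μ q y) = q p • projC v0 μ q y := by
    intro p q y
    have := LinearMap.congr_fun (C1v hv0 p q) y
    simpa using this
  have pC2v : ∀ p q y, projC v0 μ q (Gm f p y) = q p • projC v0 μ q y := by
    intro p q y
    have := LinearMap.congr_fun (C2v hv0 p q) y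
    simpa using this
  have pVidem : ∀ q y, projC v0 μ q (projC v0 μ q y) = projC v0 μ q y := by
    intro q y
    have := LinearMap.congr_fun (projC_projC v0 μ q q) y
    rw [if_pos rfl] at this
    simpa using this
  have pVorth : ∀ q q' (y : E), q ≠ q' → projC v0 μ q (projC v0 μ q' y) = 0 := by
    intro q q' y hne
    have := LinearMap.congr_fun (projC_projC v0 μ q q') y
    rw [if_neg hne] at this
    simpa using this
  have pNadj : ∀ q c x, LinearMap.adjoint (Nop q c) x
      = projC v0 μ q (LinearMap.adjoint (f (js q)) (projC w0 ν c x)) := by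
    intro q c x
    exact adjoint_N_pt c q (js q) x
  have pN : ∀ q c x, Nop q c x = projC w0 ν c (f (js q) (projC v0 μ q x)) := fun _ _ _ => rfl
  -- S is symmetric
  have hSsym : ∀ q c, (Sop q c).IsSymmetric := by
    intro q c
    rw [LinearMap.isSymmetric_iff_isSelfAdjoint, LinearMap.isSelfAdjoint_iff']
    by_cases h : ∃ j, q (j, j) ≠ 0
    · rw [hSop_pos q c h, LinearMap.adjoint_comp, LinearMap.adjoint_adjoint]
    · rw [hSop_neg q c h, map_zero]
  -- S commutes with G
  have hSGcomm : ∀ q c p, Commute (Gm f p) (Sop q c) := by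
    intro q c p
    by_cases h : ∃ j, q (j, j) ≠ 0
    · have hleft : Gm f p ∘ₗ Sop q c = q p • Sop q c := by
        rw [hSop_pos q c h]
        refine LinearMap.ext fun x => ?_
        simp only [LinearMap.comp_apply, LinearMap.smul_apply]
        rw [pNadj, pC1v, ← pNadj]
      have hright : Sop q c ∘ₗ Gm f p = q p • Sop q c := by
        rw [hSop_pos q c h]
        refine LinearMap.ext fun x => ?_
        simp only [LinearMap.comp_apply, LinearMap.smul_apply]
        rw [pN, pC2v, (f (js q)).map_smul, (projC w0 ν c).map_smul, ← pN q c x,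
          (LinearMap.adjoint (Nop q c)).map_smul]
      show Gm f p * Sop q c = Sop q c * Gm f p
      rw [Module.End.mul_eq_comp, Module.End.mul_eq_comp, hleft, hright]
    · rw [hSop_neg q c h]
      exact Commute.zero_right _
  -- products of S vanish
  have hNN0 : ∀ q c q' c' (x : E), q ≠ q' →
      Nop q c (LinearMap.adjoint (Nop q' c') x) = 0 := by
    intro q c q' c' x hne
    rw [pNadj, pN, pVorth q q' _ hne, map_zero, map_zero]
  have hSprodq : ∀ q c q' c', q ≠ q' → Sop q c ∘ₗ Sop q' c' = 0 := by
    intro q c q' c' hne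
    by_cases h : ∃ j, q (j, j) ≠ 0
    · by_cases h' : ∃ j, q' (j, j) ≠ 0
      · rw [hSop_pos q c h, hSop_pos q' c' h']
        refine LinearMap.ext fun x => ?_
        simp only [LinearMap.comp_apply, LinearMap.zero_apply]
        rw [hNN0 q c q' c' _ hne, map_zero]
      · rw [hSop_neg q' c' h', LinearMap.comp_zero]
    · rw [hSop_neg q c h, LinearMap.zero_comp]
  have hSprodc : ∀ q c c', (∃ j, q (j, j) ≠ 0) → c ≠ c' → Sop q c ∘ₗ Sop q c' = 0 := by
    intro q c c' h hne
    have h0 := key_zero hv0 hw0 q c c' hne (js q) (hjs q h)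
    rw [hSop_pos q c h, hSop_pos q c' h]
    refine LinearMap.ext fun x => ?_
    simp only [LinearMap.comp_apply, LinearMap.zero_apply]
    have h1 := LinearMap.congr_fun h0 (Nop q c' x)
    simp only [LinearMap.comp_apply, LinearMap.zero_apply] at h1
    have h2 : Nop q c (LinearMap.adjoint (Nop q c') (Nop q c' x)) = 0 := h1
    rw [h2, map_zero]
  have hSS : ∀ q c q' c', Commute (Sop q c) (Sop q' c') := by
    intro q c q' c'
    by_cases hqq : q = q'
    · subst hqq
      by_cases hcc : c = c'
      · subst hcc; exact Commute.refl _
      · by_cases h : ∃ j, q (j, j) ≠ 0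
        · show Sop q c * Sop q c' = Sop q c' * Sop q c
          rw [Module.End.mul_eq_comp, Module.End.mul_eq_comp, hSprodc q c c' h hcc,
            hSprodc q c' c h (Ne.symm hcc)]
        · rw [hSop_neg q c h]
          exact Commute.zero_left _
    · show Sop q c * Sop q' c' = Sop q' c' * Sop q c
      rw [Module.End.mul_eq_comp, Module.End.mul_eq_comp, hSprodq q c q' c' hqq,
        hSprodq q' c' q c (Ne.symm hqq)]
  -- the combined family
  set TF : ((Fin r × Fin r) ⊕ (Fin r × Fin r)) ⊕ (Fin (Module.finrank ℂ E) × Fin (Module.finrank ℂ E)) → E →ₗ[ℂ] E :=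
    Sum.elim
      (Sum.elim (fun p => Gm f p + Gm f (p.2, p.1))
        (fun p => Complex.I • (Gm f p - Gm f (p.2, p.1))))
      (fun gd => Sop (μ gd.1) (ν gd.2)) with hTF
  have hTFsym : ∀ i, (TF i).IsSymmetric := by
    intro i
    cases i with
    | inr gd => exact hSsym _ _
    | inl i' =>
      rw [LinearMap.isSymmetric_iff_isSelfAdjoint, LinearMap.isSelfAdjoint_iff']
      cases i' with
      | inl p =>
        simp only [hTF, Sum.elim_inl, map_add, adjG]
        abel
      | inr p =>
        simp only [hTF, Sum.elim_inl, Sum.elim_inr, map_smulₛₗ, map_sub, adjG, Complex.conj_I,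
          Prod.mk.eta, neg_smul, smul_sub]
        abel
  have hGScombo : ∀ (q c : Fin r × Fin r → ℂ) (i' : (Fin r × Fin r) ⊕ (Fin r × Fin r)),
      Commute (Sum.elim (fun p => Gm f p + Gm f (p.2, p.1))
        (fun p => Complex.I • (Gm f p - Gm f (p.2, p.1))) i') (Sop q c) := by
    intro q c i'
    cases i' with
    | inl p =>
      exact (hSGcomm q c p).add_left (hSGcomm q c (p.2, p.1))
    | inr p =>
      exact commute_smul_left' _ ((hSGcomm q c p).sub_left (hSGcomm q c (p.2, p.1)))
  have hTFcomm : ∀ i j, Commute (TF i) (TF j) := by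
    have hc : ∀ p p' (a a' : ℂ),
        Commute (a • (Gm f p + Gm f (p.2, p.1))) (a' • (Gm f p' + Gm f (p'.2, p'.1)))
        ∧ Commute (a • (Gm f p - Gm f (p.2, p.1))) (a' • (Gm f p' - Gm f (p'.2, p'.1)))
        ∧ Commute (a • (Gm f p + Gm f (p.2, p.1))) (a' • (Gm f p' - Gm f (p'.2, p'.1)))
        ∧ Commute (a • (Gm f p - Gm f (p.2, p.1))) (a' • (Gm f p' + Gm f (p'.2, p'.1))) := by
      intro p p' a a'
      refine ⟨?_, ?_, ?_, ?_⟩ <;>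
        refine commute_smul_left' _ (commute_smul_right' _ ?_) <;>
        [ exact ((hGc p p').add_right (hGc p (p'.2,p'.1))).add_left
            ((hGc (p.2,p.1) p').add_right (hGc (p.2,p.1) (p'.2,p'.1)));
          exact ((hGc p p').sub_right (hGc p (p'.2,p'.1))).sub_left
            ((hGc (p.2,p.1) p').sub_right (hGc (p.2,p.1) (p'.2,p'.1)));
          exact ((hGc p p').sub_right (hGc p (p'.2,p'.1))).add_left
            ((hGc (p.2,p.1) p').sub_right (hGc (p.2,p.1) (p'.2,p'.1)));
          exact ((hGc p p').add_right (hGc p (p'.2,p'.1))).sub_left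
            ((hGc (p.2,p.1) p').add_right (hGc (p.2,p.1) (p'.2,p'.1)))]
    intro i j
    cases i with
    | inr gd =>
      cases j with
      | inr gd' => exact hSS _ _ _ _
      | inl j' => exact (hGScombo _ _ j').symm
    | inl i' =>
      cases j with
      | inr gd => exact hGScombo _ _ i'
      | inl j' =>
        cases i' with
        | inl p =>
          cases j' with
          | inl p' => simpa [hTF] using (hc p p' 1 1).1
          | inr p' => simpa [hTF] using (hc p p' 1 Complex.I).2.2.1
        | inr p =>
          cases j' with
          | inl p' => simpa [hTF] using (hc p p' Complex.I 1).2.2.2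
          | inr p' => simpa [hTF] using (hc p p' Complex.I Complex.I).2.1
  obtain ⟨X, hX⟩ := jd TF hTFsym hTFcomm
  -- eigen data for the final basis
  have hXG' : ∀ α p, ∃ m : ℂ, Gm f p (X α) = m • X α := by
    intro α p
    obtain ⟨c1, h1⟩ := hX α (Sum.inl (Sum.inl p))
    obtain ⟨c2, h2⟩ := hX α (Sum.inl (Sum.inr p))
    simp only [hTF, Sum.elim_inl, Sum.elim_inr] at h1 h2
    exact ⟨_, eig_combo h1 h2⟩
  set Mf : Fin (Module.finrank ℂ E) → Fin r × Fin r → ℂ := fun α p => (hXG' α p).choose with hMfdef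
  have hMf : ∀ α p, Gm f p (X α) = Mf α p • X α := fun α p => (hXG' α p).choose_spec
  have hXS : ∀ α γ δ, ∃ s : ℂ, Sop (μ γ) (ν δ) (X α) = s • X α := by
    intro α γ δ
    obtain ⟨s, hs⟩ := hX α (Sum.inr (γ, δ))
    refine ⟨s, ?_⟩
    simpa [hTF] using hs
  have hXnorm : ∀ α, (inner ℂ (X α) (X α) : ℂ) = 1 := by
    intro α
    have := (orthonormal_iff_ite.mp X.orthonormal) α α
    simpa using this
  have hXne : ∀ α, X α ≠ 0 := fun α => X.orthonormal.ne_zero α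
  -- per-α structure
  have hstruct : ∀ α, (∀ j, f j (X α) = 0) ∨
      (∃ j0 : Fin r, f j0 (X α) ≠ 0 ∧ ∀ i, ∃ aa : ℂ, f i (X α) = aa • f j0 (X α)) := by
    intro α
    -- the class of X α
    have hsum : ∑ q ∈ Finset.univ.image μ, projC v0 μ q (X α) = X α := sum_projC_apply v0 μ _
    have huniqcls : ∀ q, projC v0 μ q (X α) ≠ 0 → q = Mf α := by
      intro q hqne
      funext p
      have h1 := pC2v p q (X α)
      rw [hMf α p, (projC v0 μ q).map_smul] at h1
      exact smul_left_injective ℂ hqne (h1.symm)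
    have hq0ex : ∃ q ∈ Finset.univ.image μ, projC v0 μ q (X α) ≠ 0 := by
      by_contra hcon
      push_neg at hcon
      apply hXne α
      rw [← hsum]
      exact Finset.sum_eq_zero hcon
    obtain ⟨q0, hq0im, hq0ne⟩ := hq0ex
    have hq0eq : q0 = Mf α := huniqcls q0 hq0ne
    have hMfim : Mf α ∈ Finset.univ.image μ := hq0eq ▸ hq0im
    have hPvx : projC v0 μ (Mf α) (X α) = X α := by
      have hothers : ∀ q ∈ Finset.univ.image μ, q ≠ Mf α → projC v0 μ q (X α) = 0 := by
        intro q _ hne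
        by_contra hcon
        exact hne (huniqcls q hcon)
      have h2 := Finset.sum_eq_single_of_mem (Mf α) hMfim hothers
      rw [← h2]
      exact hsum
    by_cases hgood : ∃ j, Mf α (j, j) ≠ 0
    · right
      have hqj0 : Mf α (js (Mf α), js (Mf α)) ≠ 0 := hjs (Mf α) hgood
      have hfj0 : f (js (Mf α)) (X α) ≠ 0 := by
        intro h0
        apply hqj0
        have := tuple_diag (v0 := X) (μ := Mf) hMf α (js (Mf α))
        rw [h0] at this
        simpa using this.symm
      refine ⟨js (Mf α), hfj0, ?_⟩
      intro i
      have hdecomp : ∀ y : E, ∑ c ∈ Finset.univ.image ν, projC w0 ν c y = y :=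
        sum_projC_apply w0 ν
      have hcomp : ∀ (c : Fin r × Fin r → ℂ) (i' : Fin r),
          projC w0 ν c (f i' (X α))
            = (c (i', js (Mf α)) / Mf α (js (Mf α), js (Mf α)))
              • projC w0 ν c (f (js (Mf α)) (X α)) := by
        intro c i'
        have := M1pt hv0 hw0 (Mf α) c (js (Mf α)) hqj0 i' (X α)
        rwa [hPvx] at this
      -- S eigenvalues
      have hSval : ∀ c ∈ Finset.univ.image ν, ∃ s : ℂ, Sop (Mf α) c (X α) = s • X α := by
        intro c hcim
        obtain ⟨γ, _, hγ⟩ := Finset.mem_image.mp hMfim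
        obtain ⟨δ, _, hδ⟩ := Finset.mem_image.mp hcim
        obtain ⟨s, hs⟩ := hXS α γ δ
        rw [hγ, hδ] at hs
        exact ⟨s, hs⟩
      have hSvalform : ∀ c, (inner ℂ (X α) (Sop (Mf α) c (X α)) : ℂ)
          = inner ℂ (projC w0 ν c (f (js (Mf α)) (X α))) (projC w0 ν c (f (js (Mf α)) (X α))) := by
        intro c
        rw [hSop_pos (Mf α) c hgood, LinearMap.comp_apply, LinearMap.adjoint_inner_right]
        congr 1 <;> · rw [pN, hPvx]
      have huniq : ∀ c ∈ Finset.univ.image ν, ∀ c' ∈ Finset.univ.image ν, c ≠ c' →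
          projC w0 ν c (f (js (Mf α)) (X α)) ≠ 0 →
          projC w0 ν c' (f (js (Mf α)) (X α)) ≠ 0 → False := by
        intro c hcim c' hcim' hne h1 h2
        obtain ⟨s, hs⟩ := hSval c hcim
        obtain ⟨s', hs'⟩ := hSval c' hcim'
        have hsne : s ≠ 0 := by
          intro h0
          apply h1
          have hv := hSvalform c
          rw [hs, inner_smul_right, h0, zero_mul] at hv
          exact inner_self_eq_zero.mp hv.symm
        have hsne' : s' ≠ 0 := by
          intro h0
          apply h2
          have hv := hSvalform c'
          rw [hs', inner_smul_right, h0, zero_mul] at hv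
          exact inner_self_eq_zero.mp hv.symm
        have hzero := LinearMap.congr_fun (hSprodc (Mf α) c c' hgood hne) (X α)
        simp only [LinearMap.comp_apply, LinearMap.zero_apply] at hzero
        rw [hs', (Sop (Mf α) c).map_smul, hs, smul_smul] at hzero
        have := smul_eq_zero.mp hzero
        rcases this with h | h
        · rcases mul_eq_zero.mp h with h' | h'
          · exact hsne' h'
          · exact hsne h'
        · exact hXne α h
      have hfj0sum : f (js (Mf α)) (X α)
          = ∑ c ∈ Finset.univ.image ν, projC w0 ν c (f (js (Mf α)) (X α)) :=
        (hdecomp _).symm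
      have hex : ∃ c ∈ Finset.univ.image ν, projC w0 ν c (f (js (Mf α)) (X α)) ≠ 0 := by
        by_contra hcon
        push_neg at hcon
        apply hfj0
        rw [hfj0sum]
        exact Finset.sum_eq_zero hcon
      obtain ⟨cstar, hcim, hcne⟩ := hex
      have hone : ∀ c ∈ Finset.univ.image ν, c ≠ cstar →
          projC w0 ν c (f (js (Mf α)) (X α)) = 0 := by
        intro c hc hne
        by_contra hcon
        exact huniq c hc cstar hcim hne hcon hcne
      have hfj0eq : f (js (Mf α)) (X α) = projC w0 ν cstar (f (js (Mf α)) (X α)) := by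
        have h2 := Finset.sum_eq_single_of_mem cstar hcim hone
        rw [← h2]
        exact hfj0sum
      refine ⟨cstar (i, js (Mf α)) / Mf α (js (Mf α), js (Mf α)), ?_⟩
      calc f i (X α) = ∑ c ∈ Finset.univ.image ν, projC w0 ν c (f i (X α)) :=
            (hdecomp _).symm
        _ = ∑ c ∈ Finset.univ.image ν,
              (c (i, js (Mf α)) / Mf α (js (Mf α), js (Mf α)))
                • projC w0 ν c (f (js (Mf α)) (X α)) :=
            Finset.sum_congr rfl fun c _ => hcomp c i
        _ = (cstar (i, js (Mf α)) / Mf α (js (Mf α), js (Mf α)))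
              • projC w0 ν cstar (f (js (Mf α)) (X α)) :=
            Finset.sum_eq_single_of_mem cstar hcim
              (fun c hc hne => by rw [hone c hc hne, smul_zero])
        _ = (cstar (i, js (Mf α)) / Mf α (js (Mf α), js (Mf α))) • f (js (Mf α)) (X α) := by
            rw [← hfj0eq]
    · left
      intro j
      push_neg at hgood
      exact tuple_diag_zero (v0 := X) (μ := Mf) hMf α j (hgood j)
  -- assemble the bases
  set Act : Set (Fin (Module.finrank ℂ E)) := {α | ∃ j, f j (X α) ≠ 0} with hActdef
  have hstruct' : ∀ α, α ∈ Act → ∃ j0 : Fin r, f j0 (X α) ≠ 0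
      ∧ ∀ i, ∃ aa : ℂ, f i (X α) = aa • f j0 (X α) := by
    intro α hα
    rcases hstruct α with h | h
    · obtain ⟨j, hj⟩ := hα
      exact absurd (h j) hj
    · exact h
  set J : Fin (Module.finrank ℂ E) → Fin r := fun α => if h : α ∈ Act then (hstruct' α h).choose else ⟨0, hr⟩
    with hJdef
  have hJ : ∀ α (h : α ∈ Act), f (J α) (X α) ≠ 0
      ∧ ∀ i, ∃ aa : ℂ, f i (X α) = aa • f (J α) (X α) := by
    intro α h
    simp only [hJdef, dif_pos h]
    exact (hstruct' α h).choose_spec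
  set AA : Fin (Module.finrank ℂ E) → Fin r → ℂ :=
    fun α i => if h : α ∈ Act then ((hJ α h).2 i).choose else 0 with hAAdef
  have hAA : ∀ α (h : α ∈ Act) (i : Fin r), f i (X α) = AA α i • f (J α) (X α) := by
    intro α h i
    simp only [hAAdef, dif_pos h]
    exact ((hJ α h).2 i).choose_spec
  set uhat : Fin (Module.finrank ℂ E) → E :=
    fun α => if h : α ∈ Act then (‖f (J α) (X α)‖⁻¹ : ℝ) • f (J α) (X α) else 0 with huhatdef
  have himg : ∀ (α β : Fin (Module.finrank ℂ E)), α ≠ β → ∀ i k,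
      (inner ℂ (f i (X α)) (f k (X β)) : ℂ) = 0 := by
    intro α β hne i k
    have h1 : (inner ℂ (f i (X α)) (f k (X β)) : ℂ) = inner ℂ (X α) (Gm f (i, k) (X β)) := by
      rw [Gm_apply, LinearMap.adjoint_inner_right]
    rw [h1, hMf β (i, k), inner_smul_right]
    have h2 := (orthonormal_iff_ite.mp X.orthonormal) α β
    rw [if_neg hne] at h2
    rw [h2, mul_zero]
  have huorth : Orthonormal ℂ (Act.restrict uhat) := by
    rw [orthonormal_iff_ite]
    rintro ⟨α, hα⟩ ⟨β, hβ⟩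
    simp only [Set.restrict, Set.domRestrict_apply, huhatdef, dif_pos hα, dif_pos hβ]
    by_cases hab : α = β
    · subst hab
      rw [if_pos rfl]
      have hn1 : ‖(‖f (J α) (X α)‖⁻¹ : ℝ) • f (J α) (X α)‖ = 1 :=
        norm_smul_inv_norm (hJ α hα).1
      rw [inner_self_eq_norm_sq_to_K, hn1]
      norm_num
    · rw [if_neg (by simpa using hab)]
      rw [real_smul_eq, real_smul_eq, inner_smul_left, inner_smul_right,
        himg α β hab (J α) (J β), mul_zero, mul_zero]
  have hcard : Module.finrank ℂ E = Fintype.card (Fin (Module.finrank ℂ E)) := by simp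
  obtain ⟨u, hu⟩ := Orthonormal.exists_orthonormalBasis_extension_of_card_eq hcard huorth
  refine ⟨X, u, fun j α => if h : α ∈ Act then AA α j * (‖f (J α) (X α)‖ : ℂ) else 0, ?_⟩
  intro j α
  beta_reduce
  by_cases h : α ∈ Act
  · rw [dif_pos h, hu α h]
    simp only [huhatdef, dif_pos h]
    rw [hAA α h j, real_smul_eq, smul_smul]
    congr 1
    have hnorm : (‖f (J α) (X α)‖ : ℂ) ≠ 0 := by
      simpa using norm_ne_zero_iff.mpr (hJ α h).1
    push_cast
    field_simp
  · rw [dif_neg h]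
    have hz : ∀ j', f j' (X α) = 0 := by
      rcases hstruct α with h1 | h1
      · exact h1
      · exact absurd ⟨h1.choose, h1.choose_spec.1⟩ h
    rw [hz j, zero_smul]

end Main

section MatrixBridge

lemma toEuclideanLin_mul {n : ℕ} (M N : Matrix (Fin n) (Fin n) ℂ) :
    Matrix.toEuclideanLin (M * N) = Matrix.toEuclideanLin M ∘ₗ Matrix.toEuclideanLin N := by
  refine LinearMap.ext fun x => ?_
  simp only [Matrix.toEuclideanLin_apply, LinearMap.comp_apply]
  apply congrArg
  rw [Matrix.mulVec_mulVec]

lemma ssvd_matrix {n r : ℕ} (hr : 0 < r) (A : Fin r → Matrix (Fin n) (Fin n) ℂ)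
    (hcomm₁ : ∀ i j k l, Commute (A i * (A j)ᴴ) (A k * (A l)ᴴ))
    (hcomm₂ : ∀ i j k l, Commute ((A i)ᴴ * A j) ((A k)ᴴ * A l)) :
    ∃ Q R : Matrix (Fin n) (Fin n) ℂ,
      Q ∈ Matrix.unitaryGroup (Fin n) ℂ ∧ R ∈ Matrix.unitaryGroup (Fin n) ℂ ∧
      ∃ d : Fin r → Fin n → ℂ, ∀ j, Q * A j * R = Matrix.diagonal (d j) := by
  classical
  set f : Fin r → EuclideanSpace ℂ (Fin n) →ₗ[ℂ] EuclideanSpace ℂ (Fin n) :=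
    fun j => Matrix.toEuclideanLin (A j) with hf
  have hadj : ∀ j, LinearMap.adjoint (f j) = Matrix.toEuclideanLin ((A j)ᴴ) := by
    intro j
    rw [hf]
    exact (Matrix.toEuclideanLin_conjTranspose_eq_adjoint (A j)).symm
  have hGm : ∀ p : Fin r × Fin r, Gm f p = Matrix.toEuclideanLin ((A p.1)ᴴ * A p.2) := by
    intro p
    rw [toEuclideanLin_mul]
    show LinearMap.adjoint (f p.1) ∘ₗ f p.2 = _
    rw [hadj]
  have hLm : ∀ p : Fin r × Fin r, Lm f p = Matrix.toEuclideanLin (A p.1 * (A p.2)ᴴ) := by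
    intro p
    rw [toEuclideanLin_mul]
    show f p.1 ∘ₗ LinearMap.adjoint (f p.2) = _
    rw [hadj]
  have hGc : ∀ p p', Commute (Gm f p) (Gm f p') := by
    intro p p'
    show Gm f p * Gm f p' = Gm f p' * Gm f p
    rw [Module.End.mul_eq_comp, Module.End.mul_eq_comp, hGm, hGm, ← toEuclideanLin_mul,
      ← toEuclideanLin_mul, (hcomm₂ p.1 p.2 p'.1 p'.2).eq]
  have hLc : ∀ p p', Commute (Lm f p) (Lm f p') := by
    intro p p'
    show Lm f p * Lm f p' = Lm f p' * Lm f p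
    rw [Module.End.mul_eq_comp, Module.End.mul_eq_comp, hLm, hLm, ← toEuclideanLin_mul,
      ← toEuclideanLin_mul, (hcomm₁ p.1 p.2 p'.1 p'.2).eq]
  obtain ⟨v, u, d, hd⟩ := ssvd hr f hGc hLc
  have hcard : Module.finrank ℂ (EuclideanSpace ℂ (Fin n)) = n := finrank_euclideanSpace_fin
  set e : Fin (Module.finrank ℂ (EuclideanSpace ℂ (Fin n))) ≃ Fin n := finCongr hcard with he
  set v' := v.reindex e with hv'
  set u' := u.reindex e with hu'
  set d' : Fin r → Fin n → ℂ := fun j k => d j (e.symm k) with hd'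
  have hdiag : ∀ j k, f j (v' k) = d' j k • u' k := by
    intro j k
    rw [hv', hu', OrthonormalBasis.reindex_apply, OrthonormalBasis.reindex_apply, hd']
    exact hd j (e.symm k)
  set Q : Matrix (Fin n) (Fin n) ℂ :=
    Matrix.of (fun k p => (starRingEnd ℂ) ((u' k : EuclideanSpace ℂ (Fin n)) p)) with hQ
  set R : Matrix (Fin n) (Fin n) ℂ :=
    Matrix.of (fun p k => (v' k : EuclideanSpace ℂ (Fin n)) p) with hR
  have hinner_u : ∀ k l, (inner ℂ (u' k) (u' l) : ℂ) = if k = l then 1 else 0 :=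
    orthonormal_iff_ite.mp u'.orthonormal
  have hinner_v : ∀ k l, (inner ℂ (v' k) (v' l) : ℂ) = if k = l then 1 else 0 :=
    orthonormal_iff_ite.mp v'.orthonormal
  refine ⟨Q, R, ?_, ?_, d', ?_⟩
  · rw [Matrix.mem_unitaryGroup_iff]
    ext k l
    rw [Matrix.mul_apply, Matrix.one_apply]
    have h1 : ∑ p, Q k p * (star Q) p l = inner ℂ (u' k) (u' l) := by
      rw [PiLp.inner_apply]
      refine Finset.sum_congr rfl fun p _ => ?_
      rw [Matrix.star_apply, hQ, Matrix.of_apply, Matrix.of_apply, RCLike.inner_apply,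
        RCLike.star_def, RCLike.conj_conj, mul_comm]
    rw [h1, hinner_u]
  · rw [Matrix.mem_unitaryGroup_iff']
    ext k l
    rw [Matrix.mul_apply, Matrix.one_apply]
    have h1 : ∑ p, (star R) k p * R p l = inner ℂ (v' k) (v' l) := by
      rw [PiLp.inner_apply]
      refine Finset.sum_congr rfl fun p _ => ?_
      rw [Matrix.star_apply, hR, Matrix.of_apply, Matrix.of_apply, RCLike.inner_apply,
        RCLike.star_def, mul_comm]
    rw [h1, hinner_v]
  · intro j
    ext k l
    rw [Matrix.mul_assoc, Matrix.mul_apply, Matrix.diagonal_apply]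
    have h1 : ∀ p, (A j * R) p l = (f j (v' l) : EuclideanSpace ℂ (Fin n)) p := by
      intro p
      rw [hf]
      show _ = (Matrix.toEuclideanLin (A j)) (v' l) p
      rw [Matrix.toEuclideanLin_apply]
      rw [PiLp.toLp_apply]
      rw [Matrix.mul_apply, Matrix.mulVec]
      simp only [dotProduct]
      rfl
    have h2 : ∑ p, Q k p * (A j * R) p l = inner ℂ (u' k) (f j (v' l)) := by
      rw [PiLp.inner_apply]
      refine Finset.sum_congr rfl fun p _ => ?_
      rw [h1 p, hQ, Matrix.of_apply, RCLike.inner_apply, mul_comm]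
    rw [h2, hdiag j l, inner_smul_right, hinner_u]
    by_cases hkl : k = l
    · subst hkl
      rw [if_pos rfl, if_pos rfl, mul_one]
    · rw [if_neg hkl, if_neg hkl, mul_zero]
end MatrixBridge

section KronFinal

open Kronecker

variable {dA dB : ℕ}

lemma kron_conjTranspose (M : Matrix (Fin dA) (Fin dA) ℂ) (N : Matrix (Fin dB) (Fin dB) ℂ) :
    (M ⊗ₖ N)ᴴ = Mᴴ ⊗ₖ Nᴴ := by
  ext ⟨a, b⟩ ⟨c, e⟩
  simp only [Matrix.conjTranspose_apply, Matrix.kroneckerMap_apply, star_mul']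

lemma stdbm_conjTranspose (k : Fin dA) :
    (Matrix.single k k (1 : ℂ))ᴴ = Matrix.single k k (1 : ℂ) := by
  ext a b
  rw [Matrix.conjTranspose_apply]
  by_cases h : k = a ∧ k = b
  · obtain ⟨h1, h2⟩ := h
    subst h1
    subst h2
    simp
  · rw [Matrix.single_apply_of_ne (h := by tauto),
      Matrix.single_apply_of_ne (h := h), star_zero]

lemma one_eq_sum_std :
    (1 : Matrix (Fin dA × Fin dB) (Fin dA × Fin dB) ℂ)
      = ∑ k, Matrix.single k k (1 : ℂ) ⊗ₖ (1 : Matrix (Fin dB) (Fin dB) ℂ) := by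
  ext ⟨a, b⟩ ⟨a', b'⟩
  simp only [Matrix.sum_apply, Matrix.kroneckerMap_apply]
  rw [Finset.sum_eq_single a (fun k _ hk => by
      rw [Matrix.single_apply_of_ne (h := by tauto), zero_mul])
    (fun h => absurd (Finset.mem_univ a) h)]
  by_cases haa : a = a' <;> by_cases hbb : b = b' <;>
    simp [Matrix.one_apply, Prod.ext_iff, haa, hbb]

lemma blockdiag_mul (V V' : Fin dA → Matrix (Fin dB) (Fin dB) ℂ) :
    (∑ k, Matrix.single k k (1 : ℂ) ⊗ₖ V k)
      * (∑ k, Matrix.single k k (1 : ℂ) ⊗ₖ V' k)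
      = ∑ k, Matrix.single k k (1 : ℂ) ⊗ₖ (V k * V' k) := by
  rw [Finset.sum_mul_sum]
  refine Finset.sum_congr rfl fun k _ => ?_
  rw [Finset.sum_eq_single k ?_ (fun h => absurd (Finset.mem_univ k) h)]
  · rw [← Matrix.mul_kronecker_mul, Matrix.single_mul_single_same, one_mul]
  · intro k' _ hk'
    rw [← Matrix.mul_kronecker_mul, Matrix.single_mul_single_of_ne (h := Ne.symm hk'),
      Matrix.zero_kronecker]

lemma blockdiag_star (V : Fin dA → Matrix (Fin dB) (Fin dB) ℂ) :
    star (∑ k, Matrix.single k k (1 : ℂ) ⊗ₖ V k)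
      = ∑ k, Matrix.single k k (1 : ℂ) ⊗ₖ (V k)ᴴ := by
  show (∑ k, Matrix.single k k (1 : ℂ) ⊗ₖ V k)ᴴ = _
  rw [Matrix.conjTranspose_sum]
  refine Finset.sum_congr rfl fun k _ => ?_
  rw [kron_conjTranspose, stdbm_conjTranspose]

lemma blockdiag_inj (V V' : Fin dA → Matrix (Fin dB) (Fin dB) ℂ)
    (h : (∑ k, Matrix.single k k (1 : ℂ) ⊗ₖ V k)
      = ∑ k, Matrix.single k k (1 : ℂ) ⊗ₖ V' k) :
    ∀ k, V k = V' k := by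
  intro k
  ext b b'
  have h2 : (∑ k', Matrix.single k' k' (1 : ℂ) ⊗ₖ V k') (k, b) (k, b')
      = (∑ k', Matrix.single k' k' (1 : ℂ) ⊗ₖ V' k') (k, b) (k, b') := by rw [h]
  have hcollapse : ∀ W : Fin dA → Matrix (Fin dB) (Fin dB) ℂ,
      (∑ k', Matrix.single k' k' (1 : ℂ) ⊗ₖ W k') (k, b) (k, b') = W k b b' := by
    intro W
    rw [Matrix.sum_apply]
    rw [Finset.sum_eq_single k ?_ (fun hcon => absurd (Finset.mem_univ k) hcon)]
    · simp [Matrix.kroneckerMap_apply, Matrix.single_apply_same]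
    · intro k' _ hk'
      simp only [Matrix.kroneckerMap_apply]
      rw [Matrix.single_apply_of_ne (h := by tauto), zero_mul]
  rw [hcollapse V, hcollapse V'] at h2
  exact h2

lemma kron_one_mem {M : Matrix (Fin dA) (Fin dA) ℂ} (hM : M ∈ Matrix.unitaryGroup (Fin dA) ℂ) :
    (M ⊗ₖ (1 : Matrix (Fin dB) (Fin dB) ℂ)) ∈ Matrix.unitaryGroup (Fin dA × Fin dB) ℂ := by
  rw [Matrix.mem_unitaryGroup_iff]
  have hstar : star (M ⊗ₖ (1 : Matrix (Fin dB) (Fin dB) ℂ))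
      = star M ⊗ₖ (1 : Matrix (Fin dB) (Fin dB) ℂ) := by
    show (M ⊗ₖ (1 : Matrix (Fin dB) (Fin dB) ℂ))ᴴ = Mᴴ ⊗ₖ (1 : Matrix (Fin dB) (Fin dB) ℂ)
    rw [kron_conjTranspose, Matrix.conjTranspose_one]
  rw [hstar, ← Matrix.mul_kronecker_mul, Matrix.mem_unitaryGroup_iff.mp hM, one_mul,
    Matrix.one_kronecker_one]

end KronFinal

end Stmt10Aux

open Stmt10Aux in
theorem stmt_10 (dA dB r : ℕ)
    (U : Matrix (Fin dA × Fin dB) (Fin dA × Fin dB) ℂ)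
    (hU : U ∈ Matrix.unitaryGroup (Fin dA × Fin dB) ℂ)
    (A : Fin r → Matrix (Fin dA) (Fin dA) ℂ)
    (B : Fin r → Matrix (Fin dB) (Fin dB) ℂ)
    (hA : LinearIndependent ℂ A) (hB : LinearIndependent ℂ B)
    (hexp : U = ∑ j, A j ⊗ₖ B j)
    (hmin : ∀ s : ℕ, s < r → ∀ (A' : Fin s → Matrix (Fin dA) (Fin dA) ℂ)
      (B' : Fin s → Matrix (Fin dB) (Fin dB) ℂ), U ≠ ∑ j, A' j ⊗ₖ B' j)
    (hnormal₁ : ∀ i j, (A i * (A j)ᴴ) * (A i * (A j)ᴴ)ᴴ = (A i * (A j)ᴴ)ᴴ * (A i * (A j)ᴴ))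
    (hcomm₁ : ∀ i j k l, Commute (A i * (A j)ᴴ) (A k * (A l)ᴴ))
    (hnormal₂ : ∀ i j, ((A i)ᴴ * A j) * ((A i)ᴴ * A j)ᴴ = ((A i)ᴴ * A j)ᴴ * ((A i)ᴴ * A j))
    (hcomm₂ : ∀ i j k l, Commute ((A i)ᴴ * A j) ((A k)ᴴ * A l)) :
    ∃ Q R : Matrix (Fin dA) (Fin dA) ℂ,
      Q ∈ Matrix.unitaryGroup (Fin dA) ℂ ∧ R ∈ Matrix.unitaryGroup (Fin dA) ℂ ∧
      ∃ V : Fin dA → Matrix (Fin dB) (Fin dB) ℂ,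
        (∀ k, V k ∈ Matrix.unitaryGroup (Fin dB) ℂ) ∧
        (Q ⊗ₖ (1 : Matrix (Fin dB) (Fin dB) ℂ)) * U * (R ⊗ₖ (1 : Matrix (Fin dB) (Fin dB) ℂ))
          = ∑ k, Matrix.single k k (1 : ℂ) ⊗ₖ V k := by
  classical
  rcases Nat.eq_zero_or_pos r with hr0 | hr
  · subst hr0
    have hU0 : U = 0 := by rw [hexp]; simp
    have h01 : (0 : Matrix (Fin dA × Fin dB) (Fin dA × Fin dB) ℂ) = 1 := by
      have h := Matrix.mem_unitaryGroup_iff'.mp hU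
      rw [hU0] at h
      simpa using h
    have hall : ∀ M : Matrix (Fin dA × Fin dB) (Fin dA × Fin dB) ℂ, M = 0 := by
      intro M
      calc M = M * 1 := (mul_one M).symm
        _ = M * 0 := by rw [← h01]
        _ = 0 := mul_zero M
    refine ⟨1, 1, one_mem _, one_mem _, fun _ => 1, fun k => one_mem _, ?_⟩
    rw [hall ((1 ⊗ₖ (1 : Matrix (Fin dB) (Fin dB) ℂ)) * U * (1 ⊗ₖ (1 : Matrix (Fin dB) (Fin dB) ℂ)))]
    exact (hall _).symm
  · obtain ⟨Q, R, hQ, hR, d, hdiag⟩ := ssvd_matrix hr A hcomm₁ hcomm₂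
    set V : Fin dA → Matrix (Fin dB) (Fin dB) ℂ := fun k => ∑ j, d j k • B j with hV
    have hW : (Q ⊗ₖ (1 : Matrix (Fin dB) (Fin dB) ℂ)) * U
        * (R ⊗ₖ (1 : Matrix (Fin dB) (Fin dB) ℂ))
        = ∑ k, Matrix.single k k (1 : ℂ) ⊗ₖ V k := by
      rw [hexp]
      calc (Q ⊗ₖ (1 : Matrix (Fin dB) (Fin dB) ℂ)) * (∑ j, A j ⊗ₖ B j)
            * (R ⊗ₖ (1 : Matrix (Fin dB) (Fin dB) ℂ))
          = ∑ j, (Q ⊗ₖ (1 : Matrix (Fin dB) (Fin dB) ℂ)) * (A j ⊗ₖ B j)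
              * (R ⊗ₖ (1 : Matrix (Fin dB) (Fin dB) ℂ)) := by
            rw [Finset.mul_sum, Finset.sum_mul]
        _ = ∑ j, (Q * A j * R) ⊗ₖ ((1 : Matrix (Fin dB) (Fin dB) ℂ) * B j * 1) := by
            refine Finset.sum_congr rfl fun j _ => ?_
            rw [← Matrix.mul_kronecker_mul, ← Matrix.mul_kronecker_mul]
        _ = ∑ j, Matrix.diagonal (d j) ⊗ₖ B j := by
            refine Finset.sum_congr rfl fun j _ => ?_
            rw [hdiag j, one_mul, mul_one]
        _ = ∑ k, Matrix.single k k (1 : ℂ) ⊗ₖ V k := by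
            ext ⟨a, b⟩ ⟨a', b'⟩
            simp only [Matrix.sum_apply, Matrix.kroneckerMap_apply, hV, Matrix.diagonal_apply,
              Matrix.single, Matrix.of_apply, Matrix.smul_apply, smul_eq_mul]
            by_cases haa : a = a'
            · subst haa
              rw [Finset.sum_eq_single a
                (fun k _ hk => by rw [if_neg (fun hh : k = a ∧ k = a => hk hh.1), zero_mul])
                (fun h => absurd (Finset.mem_univ a) h)]
              simp
            · rw [Finset.sum_eq_zero (fun j _ => by rw [if_neg haa, zero_mul]),
                Finset.sum_eq_zero (fun k _ => by
                  rw [if_neg (fun hh : k = a ∧ k = a' => haa (hh.1.symm.trans hh.2)), zero_mul])]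
    have hWmem : ((Q ⊗ₖ (1 : Matrix (Fin dB) (Fin dB) ℂ)) * U
        * (R ⊗ₖ (1 : Matrix (Fin dB) (Fin dB) ℂ)))
        ∈ Matrix.unitaryGroup (Fin dA × Fin dB) ℂ :=
      mul_mem (mul_mem (kron_one_mem hQ) hU) (kron_one_mem hR)
    have h1 := Matrix.mem_unitaryGroup_iff'.mp hWmem
    rw [hW, blockdiag_star, blockdiag_mul, one_eq_sum_std] at h1
    have hVk := blockdiag_inj _ _ h1
    exact ⟨Q, R, hQ, hR, V, fun k => Matrix.mem_unitaryGroup_iff'.mpr (hVk k), hW⟩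

end
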